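/- arXiv:1808.03116 — 2 statements merged into one kernel-verified Lean document; each statement's English description precedes it below -/
import Mathlib

section
/- The Jacobiator J(X,Y,Z) = [X,[Y,Z]_{E₀}]_{E₀} + [Y,[Z,X]_{E₀}]_{E₀} + [Z,[X,Y]_{E₀}]_{E₀} of the bracket [·,·]_{E₀} takes the following values on generators: J(X₁¹, X₂¹, X₂²) = 0, J(X₁¹, X₁², X₂²) = 0, J(X₁¹, X₂¹, X₁²) = 2𝒳₂, and J(X₂¹, X₁², X₂²) = 2𝒳₁. In particular the bracket [·,·]_{E₀} does not satisfy the Jacobi identity. -/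
noncomputable section

set_option maxHeartbeats 1000000
set_option synthInstance.maxHeartbeats 400000

open Matrix

/-- The ℝ-algebra of smooth (C^∞) functions on ℝ². -/
def Sm : Subalgebra ℝ ((ℝ × ℝ) → ℝ) where
  carrier := {f | ContDiff ℝ (⊤ : ℕ∞) f}
  mul_mem' := fun {a b} (hf : ContDiff ℝ (⊤ : ℕ∞) a) (hg : ContDiff ℝ (⊤ : ℕ∞) b) => hf.mul hg
  add_mem' := fun {a b} (hf : ContDiff ℝ (⊤ : ℕ∞) a) (hg : ContDiff ℝ (⊤ : ℕ∞) b) => hf.add hg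
  algebraMap_mem' r :=
    show ContDiff ℝ (⊤ : ℕ∞) (algebraMap ℝ ((ℝ × ℝ) → ℝ) r) from contDiff_const

/-- Smooth functions on the plane. -/
abbrev S : Type := Sm

lemma mem_Sm_iff {f : (ℝ × ℝ) → ℝ} : f ∈ Sm ↔ ContDiff ℝ (⊤ : ℕ∞) f := by
  rw [Sm]; rfl

lemma smooth_coe (f : S) : ContDiff ℝ (⊤ : ℕ∞) (f : (ℝ × ℝ) → ℝ) := mem_Sm_iff.mp f.2

/-- Sections of the trivial bundle `ℝ² × M₂(ℝ)`, as 2×2 matrices of smooth functions. -/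
abbrev E₀ : Type := Matrix (Fin 2) (Fin 2) S

/-- The section `X_j^i`: the constant elementary matrix with 1 in entry (i,j). -/
def sb (i j : Fin 2) : E₀ := Matrix.single i j 1

/-- First coordinate function. -/
def x₁ : S := ⟨fun p => p.1, mem_Sm_iff.mpr contDiff_fst⟩
/-- Second coordinate function. -/
def x₂ : S := ⟨fun p => p.2, mem_Sm_iff.mpr contDiff_snd⟩
/-- Coordinates. -/
def xc : Fin 2 → S := ![x₁, x₂]

/-- Directional derivative of a smooth function, in direction `v`. -/
def pdAux (v : ℝ × ℝ) (f : S) : S :=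
  ⟨fun p => fderiv ℝ (f : (ℝ × ℝ) → ℝ) p v,
    mem_Sm_iff.mpr (((smooth_coe f).fderiv_right (le_refl _)).clm_apply contDiff_const)⟩

/-- The vector field (derivation) `∂/∂v` on `ℝ²`. -/
def pd (v : ℝ × ℝ) : Derivation ℝ S S where
  toFun := pdAux v
  map_add' f g := by
    ext p
    have hf : DifferentiableAt ℝ (f : (ℝ × ℝ) → ℝ) p :=
      ((smooth_coe f).differentiable (by simp)).differentiableAt
    have hg : DifferentiableAt ℝ (g : (ℝ × ℝ) → ℝ) p :=
      ((smooth_coe g).differentiable (by simp)).differentiableAt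
    have h1 : ((f + g : S) : (ℝ × ℝ) → ℝ) = fun q => (f : (ℝ × ℝ) → ℝ) q + (g : (ℝ × ℝ) → ℝ) q := rfl
    simp only [pdAux, h1, AddMemClass.coe_add, Pi.add_apply]
    rw [fderiv_fun_add hf hg]
    simp
  map_smul' c f := by
    ext p
    have h1 : ((c • f : S) : (ℝ × ℝ) → ℝ) = fun q => c * (f : (ℝ × ℝ) → ℝ) q := rfl
    have hf : DifferentiableAt ℝ (f : (ℝ × ℝ) → ℝ) p :=
      ((smooth_coe f).differentiable (by simp)).differentiableAt
    simp only [pdAux]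
    rw [h1, fderiv_const_mul hf]
    simp
  map_one_eq_zero' := by
    ext p
    have h1 : ((1 : S) : (ℝ × ℝ) → ℝ) = fun _ => (1 : ℝ) := rfl
    have h2 : fderiv ℝ (1 : (ℝ × ℝ) → ℝ) p = 0 := fderiv_const_apply 1
    simp [pdAux, h1, h2]
  leibniz' f g := by
    ext p
    have hf : DifferentiableAt ℝ (f : (ℝ × ℝ) → ℝ) p :=
      ((smooth_coe f).differentiable (by simp)).differentiableAt
    have hg : DifferentiableAt ℝ (g : (ℝ × ℝ) → ℝ) p :=
      ((smooth_coe g).differentiable (by simp)).differentiableAt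
    have h1 : ((f * g : S) : (ℝ × ℝ) → ℝ) = fun q => (f : (ℝ × ℝ) → ℝ) q * (g : (ℝ × ℝ) → ℝ) q := rfl
    simp [pdAux, h1, fderiv_fun_mul hf hg]
    try ring

/-- Standard basis vectors of ℝ². -/
def ev : Fin 2 → ℝ × ℝ := ![(1, 0), (0, 1)]

/-- The anchor `ρ` of `E₀`: `ρ(X_j^i) = (x^i)² ∂/∂x^j`, extended `C^∞(ℝ²)`-linearly. -/
def anchor (X : E₀) : Derivation ℝ S S :=
  ∑ i : Fin 2, ∑ j : Fin 2, (X i j * xc i ^ 2) • pd (ev j)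

/-- The section `𝒳₁ = (x²)² X₁¹ − (x¹)² X₁²`. -/
def 𝓧₁ : E₀ := x₂ ^ 2 • sb 0 0 - x₁ ^ 2 • sb 1 0
/-- The section `𝒳₂ = (x²)² X₂¹ − (x¹)² X₂²`. -/
def 𝓧₂ : E₀ := x₂ ^ 2 • sb 0 1 - x₁ ^ 2 • sb 1 1

/-- The almost Lie bracket axioms for `(E₀, ρ)`, together with the defining values
`[X_j^i, X_l^k] = 2x^k δ_j^k X_l^i − 2x^i δ_l^i X_j^k` on the generators: ℝ-bilinearity,
skew-symmetry, the Leibniz rule, and the values on generators. -/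
def IsBracket (L : E₀ → E₀ → E₀) : Prop :=
  (∀ X X' Y, L (X + X') Y = L X Y + L X' Y) ∧
  (∀ X Y Y', L X (Y + Y') = L X Y + L X Y') ∧
  (∀ (c : ℝ) (X Y : E₀), L (c • X) Y = c • L X Y) ∧
  (∀ (c : ℝ) (X Y : E₀), L X (c • Y) = c • L X Y) ∧
  (∀ X Y, L Y X = - L X Y) ∧
  (∀ (f : S) (X Y : E₀), L X (f • Y) = anchor X f • Y + f • L X Y) ∧
  (∀ i j k l, L (sb i j) (sb k l) =
    (if j = k then (2 : S) * xc k else 0) • sb i l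
      - (if l = i then (2 : S) * xc i else 0) • sb k j)


/-- The Jacobiator of a bracket. -/
def Jac (L : E₀ → E₀ → E₀) (X Y Z : E₀) : E₀ := L X (L Y Z) + L Y (L Z X) + L Z (L X Y)
lemma S_ext {f g : S} (h : ∀ p, (f : (ℝ × ℝ) → ℝ) p = (g : (ℝ × ℝ) → ℝ) p) : f = g :=
  Subtype.ext (funext h)

lemma pd_xc (j k : Fin 2) : pd (ev j) (xc k) = if j = k then 1 else 0 := by
  fin_cases j <;> fin_cases k <;>
  · apply S_ext
    intro p
    simp [pd, pdAux, xc, x₁, x₂, ev, fderiv_fst, fderiv_snd]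

lemma pd_two_mul (v : ℝ × ℝ) (f : S) : pd v ((2 : S) * f) = (2 : S) * pd v f := by
  have h2 : pd v (2 : S) = 0 := by
    rw [show (2 : S) = 1 + 1 by norm_num, map_add, Derivation.map_one_eq_zero]
    simp
  rw [Derivation.leibniz, h2]
  simp [smul_eq_mul]
  try ring
lemma anchor_sb (a b : Fin 2) (f : S) : anchor (sb a b) f = xc a ^ 2 * pd (ev b) f := by
  fin_cases a <;> fin_cases b <;>
  · simp [anchor, sb, Fin.sum_univ_two, Matrix.single, smul_eq_mul]
    try ring
lemma anchor_val (a b k : Fin 2) :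
    anchor (sb a b) ((2 : S) * xc k) = if b = k then (2 : S) * xc a ^ 2 else 0 := by
  rw [anchor_sb, pd_two_mul, pd_xc]
  split
  · ring
  · simp

/-- values of the Jacobiator of `[·,·]_{E₀}` on generators; in particular
the bracket does not satisfy the Jacobi identity. -/
theorem statement3 (L : E₀ → E₀ → E₀) (hL : IsBracket L) :
    Jac L (sb 0 0) (sb 0 1) (sb 1 1) = 0 ∧
    Jac L (sb 0 0) (sb 1 0) (sb 1 1) = 0 ∧
    Jac L (sb 0 0) (sb 0 1) (sb 1 0) = (2 : S) • 𝓧₂ ∧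
    Jac L (sb 0 1) (sb 1 0) (sb 1 1) = (2 : S) • 𝓧₁ ∧
    ¬ (∀ X Y Z : E₀, Jac L X Y Z = 0) := by
  obtain ⟨hA1, hA2, hS1, hS2, hsk, hLb, hG⟩ := hL
  have hz : ∀ X : E₀, L X 0 = 0 := fun X => by
    have h := hS2 0 X 0
    simpa using h
  have hneg : ∀ X Y : E₀, L X (-Y) = - L X Y := fun X Y => by
    have h := hS2 (-1) X Y
    rw [show ((-1:ℝ)) • Y = -Y from neg_one_smul ℝ Y,
      show ((-1:ℝ)) • L X Y = -(L X Y) from neg_one_smul ℝ (L X Y)] at h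
    exact h
  have hsub : ∀ X Y Z : E₀, L X (Y - Z) = L X Y - L X Z := fun X Y Z => by
    rw [sub_eq_add_neg, hA2, hneg, ← sub_eq_add_neg]
  have g0000 : L (sb 0 0) (sb 0 0) = 0 := by rw [hG]; simp
  have g0001 : L (sb 0 0) (sb 0 1) = ((2 : S) * xc 0) • sb 0 1 := by rw [hG]; simp
  have g0010 : L (sb 0 0) (sb 1 0) = -(((2 : S) * xc 0) • sb 1 0) := by rw [hG]; simp
  have g0011 : L (sb 0 0) (sb 1 1) = 0 := by rw [hG]; simp
  have g0110 : L (sb 0 1) (sb 1 0) =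
      ((2 : S) * xc 1) • sb 0 0 - ((2 : S) * xc 0) • sb 1 1 := by rw [hG]; simp
  have g0111 : L (sb 0 1) (sb 1 1) = ((2 : S) * xc 1) • sb 0 1 := by rw [hG]; simp
  have g1011 : L (sb 1 0) (sb 1 1) = -(((2 : S) * xc 1) • sb 1 0) := by rw [hG]; simp
  have g1000 : L (sb 1 0) (sb 0 0) = ((2 : S) * xc 0) • sb 1 0 := by rw [hG]; simp
  have g1100 : L (sb 1 1) (sb 0 0) = 0 := by rw [hG]; simp
  have g1101 : L (sb 1 1) (sb 0 1) = -(((2 : S) * xc 1) • sb 0 1) := by rw [hG]; simp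
  have g1001 : L (sb 1 0) (sb 0 1) =
      ((2 : S) * xc 0) • sb 1 1 - ((2 : S) * xc 1) • sb 0 0 := by rw [hG]; simp
  have g1110 : L (sb 1 1) (sb 1 0) = ((2 : S) * xc 1) • sb 1 0 := by rw [hG]; simp
  have g1111 : L (sb 1 1) (sb 1 1) = 0 := by rw [hG]; simp
  have hx0 : xc 0 = x₁ := rfl
  have hx1 : xc 1 = x₂ := rfl
  have e3 : Jac L (sb 0 0) (sb 0 1) (sb 1 0) = (2 : S) • 𝓧₂ := by
    simp only [Jac, g0110, g1000, g0001, hsub, hneg, hz, hLb, g0000, g0011, g0010, g1001]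
    simp only [anchor_val]
    simp only [𝓧₂, hx0, hx1]
    simp only [show ((0:Fin 2) = 1) = False from by simp, show ((1:Fin 2) = 0) = False from by simp,
      show ((0:Fin 2) = 0) = True from by simp, show ((1:Fin 2) = 1) = True from by simp,
      if_true, if_false, zero_smul, smul_zero, add_zero, zero_add, sub_zero, zero_sub]
    module
  have e1 : Jac L (sb 0 0) (sb 0 1) (sb 1 1) = 0 := by
    simp only [Jac, g0111, g1100, g0001, g0000, g0011, g1101, hz, hsub, hneg, hLb]
    simp only [anchor_val]
    try simp only [hx0, hx1]
    simp only [show ((0:Fin 2) = 1) = False from by simp, show ((1:Fin 2) = 0) = False from by simp,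
      show ((0:Fin 2) = 0) = True from by simp, show ((1:Fin 2) = 1) = True from by simp,
      if_true, if_false, zero_smul, smul_zero, add_zero, zero_add, sub_zero, zero_sub]
    module
  have e2 : Jac L (sb 0 0) (sb 1 0) (sb 1 1) = 0 := by
    simp only [Jac, g1011, g1100, g0010, g0000, g0011, g1110, hz, hsub, hneg, hLb]
    simp only [anchor_val]
    try simp only [hx0, hx1]
    simp only [show ((0:Fin 2) = 1) = False from by simp, show ((1:Fin 2) = 0) = False from by simp,
      show ((0:Fin 2) = 0) = True from by simp, show ((1:Fin 2) = 1) = True from by simp,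
      if_true, if_false, zero_smul, smul_zero, add_zero, zero_add, sub_zero, zero_sub]
    module
  have e4 : Jac L (sb 0 1) (sb 1 0) (sb 1 1) = (2 : S) • 𝓧₁ := by
    simp only [Jac, g1011, g1101, g0110, g0111, g1100, g1111, g0000, g1110, g1001,
      hz, hsub, hneg, hLb]
    simp only [anchor_val]
    simp only [𝓧₁, hx0, hx1]
    simp only [show ((0:Fin 2) = 1) = False from by simp, show ((1:Fin 2) = 0) = False from by simp,
      show ((0:Fin 2) = 0) = True from by simp, show ((1:Fin 2) = 1) = True from by simp,
      if_true, if_false, zero_smul, smul_zero, add_zero, zero_add, sub_zero, zero_sub]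
    module
  refine ⟨e1, e2, e3, e4, ?_⟩
  intro hall
  have h0 := hall (sb 0 0) (sb 0 1) (sb 1 0)
  rw [e3] at h0
  have h1 := congrArg (fun M : E₀ => ((M 0 1 : S) : (ℝ × ℝ) → ℝ) (0, 1)) h0
  simp only [𝓧₂, sb, Matrix.smul_apply, Matrix.sub_apply, smul_eq_mul,
    Matrix.single, Matrix.of_apply, Matrix.zero_apply] at h1
  norm_num [x₁, x₂, MulMemClass.coe_mul, SubmonoidClass.coe_pow, AddSubgroupClass.coe_sub,
    OneMemClass.coe_one, ZeroMemClass.coe_zero] at h1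
  rw [show ((2 : S) : (ℝ × ℝ) → ℝ) (0, 1) = 2 from rfl] at h1
  norm_num at h1
end
end

section
/- A section X of E₀ satisfies ρ(X) = 0 if and only if there exist smooth functions f, g ∈ C^∞(ℝ²) such that X = f·𝒳₁ + g·𝒳₂, where 𝒳₁ = (x²)² X₁¹ − (x¹)² X₁² and 𝒳₂ = (x²)² X₂¹ − (x¹)² X₂². That is, the kernel of the anchor ρ on sections is exactly the C^∞(ℝ²)-submodule generated by 𝒳₁ and 𝒳₂. -/
noncomputable section

set_option maxHeartbeats 1000000
set_option synthInstance.maxHeartbeats 400000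

open Matrix

section Analytic
open MeasureTheory Metric Set

lemma param_int_contDiff {E : Type*} [NormedAddCommGroup E] [NormedSpace ℝ E] [CompleteSpace E]
    (n : ℕ) (G : (ℝ × ℝ) × ℝ → E) (hG : ContDiff ℝ n G) :
    ContDiff ℝ n (fun x : ℝ × ℝ => ∫ t in (0:ℝ)..1, G (x, t)) := by
  induction n generalizing E with
  | zero =>
      rw [show ((0:ℕ) : WithTop ℕ∞) = 0 by rfl, contDiff_zero] at hG ⊢
      exact intervalIntegral.continuous_parametric_intervalIntegral_of_continuous'
        (f := fun x t => G (x, t)) (μ := volume) hG 0 1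
  | succ n ih =>
      have h1 : (1 : WithTop ℕ∞) ≤ (n+1 : ℕ) := by exact_mod_cast Nat.one_le_iff_ne_zero.mpr (Nat.succ_ne_zero n)
      set G' : (ℝ × ℝ) × ℝ → (ℝ × ℝ) →L[ℝ] E :=
        fun p => (fderiv ℝ G p).comp (ContinuousLinearMap.inl ℝ (ℝ × ℝ) ℝ) with hG'def
      have hG' : ContDiff ℝ n G' := by
        apply (hG.fderiv_right (m := n) ?_).clm_comp contDiff_const
        exact_mod_cast le_refl _
      have hGc : Continuous G := hG.continuous
      have hG'c : Continuous G' := hG'.continuous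
      have key : ∀ x₀ : ℝ × ℝ, HasFDerivAt (fun x : ℝ × ℝ => ∫ t in (0:ℝ)..1, G (x, t))
          (∫ t in (0:ℝ)..1, G' (x₀, t)) x₀ := by
        intro x₀
        obtain ⟨M, hM⟩ : ∃ M, ∀ p ∈ (closedBall x₀ 1) ×ˢ (Icc (0:ℝ) 1), ‖G' p‖ ≤ M :=
          ((isCompact_closedBall x₀ 1).prod isCompact_Icc).exists_bound_of_continuousOn
            hG'c.continuousOn
        apply hasFDerivAt_integral_of_dominated_of_fderiv_le'' (s := ball x₀ 1) (bound := fun _ => M)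
          (F := fun x t => G (x, t)) (F' := fun x t => G' (x, t)) (ball_mem_nhds x₀ one_pos)
        · exact Filter.Eventually.of_forall fun x =>
            ((hGc.comp (Continuous.prodMk_right x)).aestronglyMeasurable).restrict
        · exact ((hGc.comp (Continuous.prodMk_right x₀))).intervalIntegrable 0 1
        · exact ((hG'c.comp (Continuous.prodMk_right x₀))).aestronglyMeasurable.restrict
        · refine (ae_restrict_mem measurableSet_uIoc).mono fun t ht x hx => ?_
          apply hM
          refine ⟨ball_subset_closedBall hx, ?_⟩
          rw [Set.uIoc_of_le (by norm_num : (0:ℝ) ≤ 1)] at ht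
          exact ⟨le_of_lt ht.1, ht.2⟩
        · exact intervalIntegrable_const
        · refine (ae_restrict_mem measurableSet_uIoc).mono fun t _ x _ => ?_
          have hdG : HasFDerivAt G (fderiv ℝ G (x, t)) (x, t) :=
            (hG.differentiable (by simp) (x, t)).hasFDerivAt
          exact hdG.comp x (hasFDerivAt_prodMk_left x t)
      have hdiff : Differentiable ℝ (fun x : ℝ × ℝ => ∫ t in (0:ℝ)..1, G (x, t)) :=
        fun x => (key x).differentiableAt
      rw [show ((n+1 : ℕ) : WithTop ℕ∞) = (n : WithTop ℕ∞) + 1 by exact_mod_cast rfl,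
        contDiff_succ_iff_fderiv]
      refine ⟨hdiff, by simp, ?_⟩
      have : (fderiv ℝ fun x : ℝ × ℝ => ∫ t in (0:ℝ)..1, G (x, t))
          = fun x => ∫ t in (0:ℝ)..1, G' (x, t) := funext fun x => (key x).fderiv
      rw [this]
      exact ih _ hG'

lemma dense_zero_one {f : ℝ → ℝ} (hf : Continuous f) (h : ∀ x : ℝ, x ≠ 0 → f x = 0) :
    ∀ x, f x = 0 := by
  intro x
  rcases eq_or_ne x 0 with rfl | hx
  · have h1 : Filter.Tendsto (fun n : ℕ => (1:ℝ) / (n + 1)) Filter.atTop (nhds 0) :=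
      tendsto_one_div_add_atTop_nhds_zero_nat
    have h2 : Filter.Tendsto (fun n : ℕ => f (1 / (n + 1))) Filter.atTop (nhds (f 0)) :=
      (hf.tendsto 0).comp h1
    have h3 : (fun n : ℕ => f (1 / (n + 1))) = fun _ => (0:ℝ) := by
      funext n
      exact h _ (by positivity)
    rw [h3] at h2
    exact (tendsto_nhds_unique tendsto_const_nhds h2).symm
  · exact h x hx

lemma dense_zero_two {f : (ℝ × ℝ) → ℝ} (hf : Continuous f)
    (h : ∀ p : ℝ × ℝ, p.2 ≠ 0 → f p = 0) : ∀ p, f p = 0 := by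
  rintro ⟨x, y⟩
  have := dense_zero_one (f := fun t => f (x, t)) (hf.comp (Continuous.prodMk_right x))
    (fun t ht => h (x, t) ht)
  exact this y

lemma hadamard {a : (ℝ × ℝ) → ℝ} (ha : ContDiff ℝ (⊤ : ℕ∞) a) (h0 : ∀ x : ℝ, a (x, 0) = 0) :
    ∃ g : (ℝ × ℝ) → ℝ, ContDiff ℝ (⊤ : ℕ∞) g ∧ ∀ p : ℝ × ℝ, a p = p.2 * g p := by
  set D : (ℝ × ℝ) → ℝ := fun p => fderiv ℝ a p (0, 1) with hDdef
  have hD : ContDiff ℝ (⊤ : ℕ∞) D :=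
    ((ha.fderiv_right (le_refl _)).clm_apply contDiff_const)
  have hcomp : ContDiff ℝ (⊤ : ℕ∞) (fun q : (ℝ × ℝ) × ℝ => D (q.1.1, q.2 * q.1.2)) := by
    apply hD.comp
    exact (contDiff_fst.comp contDiff_fst).prodMk (contDiff_snd.mul (contDiff_snd.comp contDiff_fst))
  refine ⟨fun p => ∫ t in (0:ℝ)..1, D (p.1, t * p.2), ?_, ?_⟩
  · rw [contDiff_infty]
    intro n
    exact param_int_contDiff n (fun q => D (q.1.1, q.2 * q.1.2)) (hcomp.of_le (by exact_mod_cast le_top))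
  · rintro ⟨x, y⟩
    have hderiv : ∀ t ∈ Set.uIcc (0:ℝ) 1, HasDerivAt (fun s => a (x, s * y)) (y * D (x, t * y)) t := by
      intro t _
      have h1 : HasFDerivAt a (fderiv ℝ a (x, t * y)) (x, t * y) :=
        (ha.differentiable (by simp) (x, t * y)).hasFDerivAt
      have h2 : HasDerivAt (fun s : ℝ => ((x, s * y) : ℝ × ℝ)) ((0:ℝ), y) t := by
        have := (hasDerivAt_const t x).prodMk ((hasDerivAt_id t).mul_const y)
        simpa using this
      have h3 := h1.comp_hasDerivAt t h2
      refine h3.congr_deriv ?_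
      have : ((0:ℝ), y) = y • ((0:ℝ), (1:ℝ)) := by simp
      rw [this, (fderiv ℝ a (x, t * y)).map_smul]
      simp [hDdef, smul_eq_mul, mul_comm]
    have hint : IntervalIntegrable (fun t => y * D (x, t * y)) MeasureTheory.volume 0 1 := by
      apply Continuous.intervalIntegrable
      exact continuous_const.mul (hD.continuous.comp (continuous_const.prodMk
        (continuous_id.mul continuous_const)))
    have hfund := intervalIntegral.integral_eq_sub_of_hasDerivAt hderiv hint
    rw [intervalIntegral.integral_const_mul] at hfund
    simp only [one_mul, zero_mul, h0 x] at hfund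
    rw [hfund]; ring

lemma divide {a b : (ℝ × ℝ) → ℝ} (ha : ContDiff ℝ (⊤ : ℕ∞) a) (hb : ContDiff ℝ (⊤ : ℕ∞) b)
    (hrel : ∀ p : ℝ × ℝ, a p * p.1 ^ 2 + b p * p.2 ^ 2 = 0) :
    ∃ f : (ℝ × ℝ) → ℝ, ContDiff ℝ (⊤ : ℕ∞) f ∧ (∀ p : ℝ × ℝ, a p = f p * p.2 ^ 2) ∧
      (∀ p : ℝ × ℝ, b p = -(f p * p.1 ^ 2)) := by
  -- Step A : a (x,0) = 0
  have hA : ∀ x : ℝ, a (x, 0) = 0 := by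
    apply dense_zero_one (hf := ha.continuous.comp (continuous_id.prodMk continuous_const))
    intro x hx
    have := hrel (x, 0)
    simp at this
    rcases this with h | h
    · exact h
    · exact absurd h hx
  obtain ⟨g₁, hg₁, hag₁⟩ := hadamard ha hA
  -- Step C : g₁ p * p.1^2 + b p * p.2 = 0 everywhere
  have hC : ∀ p : ℝ × ℝ, g₁ p * p.1 ^ 2 + b p * p.2 = 0 := by
    apply dense_zero_two (hf := (hg₁.continuous.mul (by fun_prop)).add (hb.continuous.mul (by fun_prop)))
    intro p hp
    have h1 := hrel p
    rw [hag₁ p] at h1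
    have h2 : p.2 * (g₁ p * p.1 ^ 2 + b p * p.2) = 0 := by ring_nf; ring_nf at h1; linarith
    rcases mul_eq_zero.mp h2 with h | h
    · exact absurd h hp
    · exact h
  -- Step D : g₁ (x,0) = 0
  have hD : ∀ x : ℝ, g₁ (x, 0) = 0 := by
    apply dense_zero_one (hf := hg₁.continuous.comp (continuous_id.prodMk continuous_const))
    intro x hx
    have := hC (x, 0)
    simp at this
    rcases this with h | h
    · exact h
    · exact absurd h hx
  obtain ⟨f, hf, hgf⟩ := hadamard hg₁ hD
  have haf : ∀ p : ℝ × ℝ, a p = f p * p.2 ^ 2 := by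
    intro p; rw [hag₁ p, hgf p]; ring
  refine ⟨f, hf, haf, ?_⟩
  -- Step F : b = -(f * p.1^2)
  have hF : ∀ p : ℝ × ℝ, b p + f p * p.1 ^ 2 = 0 := by
    apply dense_zero_two (hf := hb.continuous.add (hf.continuous.mul (by fun_prop)))
    intro p hp
    have h1 := hrel p
    rw [haf p] at h1
    have h2 : p.2 ^ 2 * (b p + f p * p.1 ^ 2) = 0 := by ring_nf; ring_nf at h1; linarith
    rcases mul_eq_zero.mp h2 with h | h
    · exact absurd (pow_eq_zero_iff (by norm_num) |>.mp h) hp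
    · exact h
  intro p
  have := hF p
  linarith

end Analytic

lemma pd_apply (v : ℝ × ℝ) (f : S) (p : ℝ × ℝ) :
    ((pd v f : S) : (ℝ × ℝ) → ℝ) p = fderiv ℝ (f : (ℝ × ℝ) → ℝ) p v := rfl

lemma pd_x₁ (v : ℝ × ℝ) : pd v x₁ = algebraMap ℝ S v.1 := by
  apply Subtype.ext
  funext p
  rw [pd_apply]
  have : (x₁ : (ℝ × ℝ) → ℝ) = Prod.fst := rfl
  rw [this, fderiv_fst]
  rfl

lemma pd_x₂ (v : ℝ × ℝ) : pd v x₂ = algebraMap ℝ S v.2 := by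
  apply Subtype.ext
  funext p
  rw [pd_apply]
  have : (x₂ : (ℝ × ℝ) → ℝ) = Prod.snd := rfl
  rw [this, fderiv_snd]
  rfl

lemma anchor_apply (X : E₀) (h : S) :
    anchor X h = (X 0 0 * x₁ ^ 2 + X 1 0 * x₂ ^ 2) * pd (ev 0) h
      + (X 0 1 * x₁ ^ 2 + X 1 1 * x₂ ^ 2) * pd (ev 1) h := by
  rw [anchor]
  rw [Fin.sum_univ_two]
  simp only [Fin.sum_univ_two, Derivation.add_apply, Derivation.smul_apply, xc]
  simp only [Matrix.cons_val_zero, Matrix.cons_val_one, Matrix.head_cons, smul_eq_mul]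
  ring

lemma anchor_zero_iff (X : E₀) :
    anchor X = 0 ↔
      (X 0 0 * x₁ ^ 2 + X 1 0 * x₂ ^ 2 = 0 ∧ X 0 1 * x₁ ^ 2 + X 1 1 * x₂ ^ 2 = 0) := by
  have hev0 : (ev 0 : ℝ × ℝ) = (1, 0) := rfl
  have hev1 : (ev 1 : ℝ × ℝ) = (0, 1) := rfl
  constructor
  · intro h
    have h1 := congrArg (fun D : Derivation ℝ S S => D x₁) h
    have h2 := congrArg (fun D : Derivation ℝ S S => D x₂) h
    simp only [anchor_apply, Derivation.zero_apply] at h1 h2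
    rw [pd_x₁, pd_x₁, hev0, hev1] at h1
    rw [pd_x₂, pd_x₂, hev0, hev1] at h2
    simp only [_root_.map_one, _root_.map_zero, mul_one, mul_zero, add_zero, zero_add] at h1 h2
    exact ⟨h1, h2⟩
  · rintro ⟨h1, h2⟩
    apply Derivation.ext
    intro h
    rw [anchor_apply, h1, h2, Derivation.zero_apply]
    ring

lemma S_eq_iff (u v : S) : u = v ↔ ∀ p, (u : (ℝ × ℝ) → ℝ) p = (v : (ℝ × ℝ) → ℝ) p := by
  constructor
  · intro h p; rw [h]
  · intro h; exact Subtype.ext (funext h)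

lemma coe_combo (u v : S) (p : ℝ × ℝ) :
    ((u * x₁ ^ 2 + v * x₂ ^ 2 : S) : (ℝ × ℝ) → ℝ) p
      = (u : (ℝ × ℝ) → ℝ) p * p.1 ^ 2 + (v : (ℝ × ℝ) → ℝ) p * p.2 ^ 2 := by
  rfl

lemma combo_entries (f g : S) : (f • 𝓧₁ + g • 𝓧₂) 0 0 = f * x₂ ^ 2
    ∧ (f • 𝓧₁ + g • 𝓧₂) 1 0 = -(f * x₁ ^ 2)
    ∧ (f • 𝓧₁ + g • 𝓧₂) 0 1 = g * x₂ ^ 2 ∧ (f • 𝓧₁ + g • 𝓧₂) 1 1 = -(g * x₁ ^ 2) := by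
  refine ⟨?_, ?_, ?_, ?_⟩ <;>
    simp [𝓧₁, 𝓧₂, sb, Matrix.single, Matrix.add_apply, Matrix.smul_apply,
      Matrix.sub_apply, Matrix.of_apply, smul_eq_mul] <;> ring

/-- the kernel of the anchor `ρ` on sections of `E₀` is exactly the
`C^∞(ℝ²)`-submodule generated by `𝒳₁` and `𝒳₂`. -/
theorem statement4 (X : E₀) :
    anchor X = 0 ↔ ∃ f g : S, X = f • 𝓧₁ + g • 𝓧₂ := by
  rw [anchor_zero_iff]
  constructor
  · rintro ⟨h1, h2⟩
    have h1p : ∀ p : ℝ × ℝ, ((X 0 0 : S) : (ℝ × ℝ) → ℝ) p * p.1 ^ 2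
        + ((X 1 0 : S) : (ℝ × ℝ) → ℝ) p * p.2 ^ 2 = 0 := by
      intro p
      have := (S_eq_iff _ _).mp h1 p
      rwa [coe_combo] at this
    have h2p : ∀ p : ℝ × ℝ, ((X 0 1 : S) : (ℝ × ℝ) → ℝ) p * p.1 ^ 2
        + ((X 1 1 : S) : (ℝ × ℝ) → ℝ) p * p.2 ^ 2 = 0 := by
      intro p
      have := (S_eq_iff _ _).mp h2 p
      rwa [coe_combo] at this
    obtain ⟨f, hf, haf, hbf⟩ := divide (smooth_coe (X 0 0)) (smooth_coe (X 1 0)) h1p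
    obtain ⟨g, hg, hag, hbg⟩ := divide (smooth_coe (X 0 1)) (smooth_coe (X 1 1)) h2p
    refine ⟨⟨f, mem_Sm_iff.mpr hf⟩, ⟨g, mem_Sm_iff.mpr hg⟩, ?_⟩
    obtain ⟨e1, e2, e3, e4⟩ := combo_entries (⟨f, mem_Sm_iff.mpr hf⟩ : S) ⟨g, mem_Sm_iff.mpr hg⟩
    have c00 : X 0 0 = ((⟨f, mem_Sm_iff.mpr hf⟩ : S) • 𝓧₁ + (⟨g, mem_Sm_iff.mpr hg⟩ : S) • 𝓧₂) 0 0 := by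
      rw [e1, S_eq_iff]; intro p; exact haf p
    have c01 : X 0 1 = ((⟨f, mem_Sm_iff.mpr hf⟩ : S) • 𝓧₁ + (⟨g, mem_Sm_iff.mpr hg⟩ : S) • 𝓧₂) 0 1 := by
      rw [e3, S_eq_iff]; intro p; exact hag p
    have c10 : X 1 0 = ((⟨f, mem_Sm_iff.mpr hf⟩ : S) • 𝓧₁ + (⟨g, mem_Sm_iff.mpr hg⟩ : S) • 𝓧₂) 1 0 := by
      rw [e2, S_eq_iff]; intro p; exact hbf p
    have c11 : X 1 1 = ((⟨f, mem_Sm_iff.mpr hf⟩ : S) • 𝓧₁ + (⟨g, mem_Sm_iff.mpr hg⟩ : S) • 𝓧₂) 1 1 := by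
      rw [e4, S_eq_iff]; intro p; exact hbg p
    apply Matrix.ext
    intro i j
    fin_cases i <;> fin_cases j <;> first | exact c00 | exact c01 | exact c10 | exact c11
  · rintro ⟨f, g, rfl⟩
    obtain ⟨e1, e2, e3, e4⟩ := combo_entries f g
    rw [e1, e2, e3, e4]
    constructor <;> ring
end
end
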